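/- Let Γ be a compact Hausdorff topological group acting continuously and transitively on a compact Hausdorff space V. If Γ is metrizable via a bi-invariant metric, then V is metrizable via a Γ-invariant metric; specifically, d_V(x,y) = inf{ d_Γ(1,σ) : σ ∈ Γ, σx = y } defines a Γ-invariant metric inducing the topology of V. -/

import Mathlib

/-- The candidate `Γ`-invariant metric on `V`:
`d_V(x, y) = inf { d_Γ(1, σ) : σ ∈ Γ, σ • x = y }`. -/
noncomputable def dV {Γ V : Type*} [Group Γ] [MulAction Γ V]
    (dG : Γ → Γ → ℝ) (x y : V) : ℝ :=
  sInf {r : ℝ | ∃ σ : Γ, σ • x = y ∧ dG 1 σ = r}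

/-- if a compact Hausdorff group `Γ`, metrizable via a bi-invariant
metric `d_Γ`, acts continuously and transitively on a compact Hausdorff space `V`,
then `d_V(x,y) = inf { d_Γ(1,σ) : σx = y }` is a `Γ`-invariant metric inducing the
topology of `V`. -/
theorem stmt_14 {Γ V : Type*}
    [Group Γ] [TopologicalSpace Γ] [IsTopologicalGroup Γ] [CompactSpace Γ] [T2Space Γ]
    [TopologicalSpace V] [CompactSpace V] [T2Space V]
    [MulAction Γ V] [ContinuousSMul Γ V]
    (htrans : ∀ x y : V, ∃ σ : Γ, σ • x = y)
    (dG : Γ → Γ → ℝ)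
    (hmetric : (∀ σ τ : Γ, 0 ≤ dG σ τ) ∧ (∀ σ τ : Γ, dG σ τ = 0 ↔ σ = τ) ∧
      (∀ σ τ : Γ, dG σ τ = dG τ σ) ∧ (∀ σ τ ρ : Γ, dG σ ρ ≤ dG σ τ + dG τ ρ))
    (hbiinv : ∀ lam gam σ τ : Γ, dG (lam * σ * gam) (lam * τ * gam) = dG σ τ)
    (hinduces : ∀ s : Set Γ, IsOpen s ↔
      ∀ x ∈ s, ∃ ε > 0, ∀ y : Γ, dG x y < ε → y ∈ s) :
    (∀ x y : V, 0 ≤ dV dG x y) ∧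
      (∀ x y : V, dV dG x y = 0 ↔ x = y) ∧
      (∀ x y : V, dV dG x y = dV dG y x) ∧
      (∀ x y z : V, dV dG x z ≤ dV dG x y + dV dG y z) ∧
      (∀ (σ : Γ) (x y : V), dV dG (σ • x) (σ • y) = dV dG x y) ∧
      (∀ s : Set V, IsOpen s ↔
        ∀ x ∈ s, ∃ ε > 0, ∀ y : V, dV dG x y < ε → y ∈ s) := by
  obtain ⟨hpos, hzero, hsymm, htri⟩ := hmetric
  have hright : ∀ σ τ γ : Γ, dG (σ * γ) (τ * γ) = dG σ τ := by
    intro σ τ γ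
    have := hbiinv 1 γ σ τ
    simpa using this
  have hleft : ∀ l σ τ : Γ, dG (l * σ) (l * τ) = dG σ τ := by
    intro l σ τ
    have := hbiinv l 1 σ τ
    simpa using this
  have hinv : ∀ σ : Γ, dG 1 σ⁻¹ = dG 1 σ := by
    intro σ
    have h := hleft σ 1 σ⁻¹
    simp only [mul_one, mul_inv_cancel] at h
    rw [← h]
    exact hsymm σ 1
  -- basic facts about the defining set
  have hne : ∀ x y : V, Set.Nonempty {r : ℝ | ∃ σ : Γ, σ • x = y ∧ dG 1 σ = r} := by
    intro x y
    obtain ⟨σ, hσ⟩ := htrans x y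
    exact ⟨dG 1 σ, σ, hσ, rfl⟩
  have hbdd : ∀ x y : V, BddBelow {r : ℝ | ∃ σ : Γ, σ • x = y ∧ dG 1 σ = r} := by
    intro x y
    refine ⟨0, ?_⟩
    rintro r ⟨τ, -, rfl⟩
    exact hpos _ _
  -- balls in Γ are open
  have hball_open : ∀ (a : Γ) (ε : ℝ), IsOpen {τ : Γ | dG a τ < ε} := by
    intro a ε
    rw [hinduces]
    intro x hx
    refine ⟨ε - dG a x, by simpa using hx, fun y hy => ?_⟩
    have := htri a x y
    simp only [Set.mem_setOf_eq]
    linarith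
  -- distance from a point is continuous
  have hcont : ∀ a : Γ, Continuous (dG a) := by
    intro a
    rw [continuous_iff_continuousAt]
    intro b
    rw [ContinuousAt, Metric.tendsto_nhds]
    intro ε hε
    have hmem : {τ : Γ | dG b τ < ε} ∈ nhds b := by
      refine (hball_open b ε).mem_nhds ?_
      simp only [Set.mem_setOf_eq, (hzero b b).mpr rfl]
      exact hε
    filter_upwards [hmem] with τ hτ
    rw [Real.dist_eq, abs_sub_lt_iff]
    have h1 := htri a b τ
    have h2 := htri a τ b
    have h3 : dG τ b = dG b τ := hsymm τ b
    constructor <;> linarith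
  -- the infimum is attained
  have hmin : ∀ x y : V, ∃ σ : Γ, σ • x = y ∧ dG 1 σ = dV dG x y := by
    intro x y
    have hSc : IsClosed {σ : Γ | σ • x = y} :=
      isClosed_eq (continuous_id.smul continuous_const) continuous_const
    have hScomp : IsCompact {σ : Γ | σ • x = y} := hSc.isCompact
    obtain ⟨σ₀, hσ₀, hm⟩ := hScomp.exists_isMinOn (htrans x y) ((hcont 1).continuousOn)
    refine ⟨σ₀, hσ₀, ?_⟩
    unfold dV
    apply le_antisymm
    · apply le_csInf (hne x y)
      rintro r ⟨τ, hτ, rfl⟩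
      exact (isMinOn_iff.mp hm) τ hτ
    · exact csInf_le (hbdd x y) ⟨σ₀, hσ₀, rfl⟩
  -- nonnegativity
  have hVnonneg : ∀ x y : V, 0 ≤ dV dG x y := by
    intro x y
    apply le_csInf (hne x y)
    rintro r ⟨τ, -, rfl⟩
    exact hpos _ _
  refine ⟨hVnonneg, ?_, ?_, ?_, ?_, ?_⟩
  · -- zero iff equal
    intro x y
    constructor
    · intro h
      obtain ⟨σ₀, hσ₀, hd⟩ := hmin x y
      have : σ₀ = 1 := by
        have h1 : dG 1 σ₀ = 0 := by rw [hd, h]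
        have := (hzero 1 σ₀).mp h1
        exact this.symm
      rw [this, one_smul] at hσ₀
      exact hσ₀
    · rintro rfl
      apply le_antisymm _ (hVnonneg x x)
      have : (0 : ℝ) ∈ {r : ℝ | ∃ σ : Γ, σ • x = x ∧ dG 1 σ = r} :=
        ⟨1, one_smul _ _, (hzero 1 1).mpr rfl⟩
      exact csInf_le (hbdd x x) this
  · -- symmetry
    intro x y
    unfold dV
    congr 1
    ext r
    constructor <;> rintro ⟨σ, hσ, rfl⟩
    · exact ⟨σ⁻¹, by rw [← hσ, inv_smul_smul], hinv σ⟩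
    · exact ⟨σ⁻¹, by rw [← hσ, inv_smul_smul], hinv σ⟩
  · -- triangle inequality
    intro x y z
    obtain ⟨σ, hσ, hdσ⟩ := hmin x y
    obtain ⟨τ, hτ, hdτ⟩ := hmin y z
    have hmem : dG 1 (τ * σ) ∈ {r : ℝ | ∃ ρ : Γ, ρ • x = z ∧ dG 1 ρ = r} :=
      ⟨τ * σ, by rw [mul_smul, hσ, hτ], rfl⟩
    have h1 : dV dG x z ≤ dG 1 (τ * σ) := csInf_le (hbdd x z) hmem
    have h2 : dG 1 (τ * σ) ≤ dG 1 τ + dG τ (τ * σ) := htri 1 τ (τ * σ)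
    have h3 : dG τ (τ * σ) = dG 1 σ := by
      have := hleft τ 1 σ
      simpa using this
    rw [← hdσ, ← hdτ]
    linarith
  · -- Γ-invariance
    intro σ x y
    unfold dV
    congr 1
    ext r
    constructor
    · rintro ⟨τ, hτ, rfl⟩
      refine ⟨σ⁻¹ * τ * σ, ?_, ?_⟩
      · have : (σ⁻¹ * τ * σ) • x = σ⁻¹ • (τ • (σ • x)) := by
          rw [mul_smul, mul_smul]
        rw [this, hτ, inv_smul_smul]
      · have := hbiinv σ⁻¹ σ 1 τ
        simpa using this
    · rintro ⟨ρ, hρ, rfl⟩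
      refine ⟨σ * ρ * σ⁻¹, ?_, ?_⟩
      · have : (σ * ρ * σ⁻¹) • (σ • x) = σ • (ρ • x) := by
          rw [mul_smul, mul_smul, inv_smul_smul]
        rw [this, hρ]
      · have := hbiinv σ σ⁻¹ 1 ρ
        simpa using this
  · -- topology
    intro s
    constructor
    · -- open implies ball condition
      intro hs x hx
      have hf : Continuous (fun σ : Γ => σ • x) := continuous_id.smul continuous_const
      have hopen : IsOpen ((fun σ : Γ => σ • x) ⁻¹' s) := hs.preimage hf
      obtain ⟨ε, hε, hb⟩ := (hinduces _).mp hopen 1 (by simpa using hx)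
      refine ⟨ε, hε, fun y hy => ?_⟩
      obtain ⟨σ₀, hσ₀, hd⟩ := hmin x y
      have : dG 1 σ₀ < ε := by rw [hd]; exact hy
      have h2 := hb σ₀ this
      rwa [Set.mem_preimage, hσ₀] at h2
    · -- ball condition implies open
      intro hcond
      by_cases hV : Nonempty V
      · obtain ⟨x₀⟩ := hV
        set f : Γ → V := fun σ => σ • x₀ with hf_def
        have hf : Continuous f := continuous_id.smul continuous_const
        have hsurj : Function.Surjective f := fun y => htrans x₀ y
        have hpre : IsOpen (f ⁻¹' s) := by
          rw [hinduces]
          intro σ hσ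
          obtain ⟨ε, hε, hb⟩ := hcond (σ • x₀) hσ
          refine ⟨ε, hε, fun τ hτ => ?_⟩
          apply hb
          have hmem : dG σ τ ∈ {r : ℝ | ∃ ρ : Γ, ρ • (σ • x₀) = τ • x₀ ∧ dG 1 ρ = r} := by
            refine ⟨τ * σ⁻¹, ?_, ?_⟩
            · rw [smul_smul, inv_mul_cancel_right]
            · have := hright 1 (τ * σ⁻¹) σ
              simpa using this.symm
          calc dV dG (σ • x₀) (τ • x₀) ≤ dG σ τ := csInf_le (hbdd _ _) hmem
          _ < ε := hτ
        have hclosed : IsClosedMap f := hf.isClosedMap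
        have : IsClosed sᶜ := by
          have himg : f '' (f ⁻¹' sᶜ) = sᶜ := Set.image_preimage_eq _ hsurj
          rw [← himg]
          exact hclosed _ (by rw [Set.preimage_compl]; exact hpre.isClosed_compl)
        simpa using this.isOpen_compl
      · rw [not_nonempty_iff] at hV
        rw [Set.eq_empty_of_isEmpty s]
        exact isOpen_empty
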